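/- Uniform truncated Taylor estimate for the q-th power integral: let q > 2. There exists a constant C > 0, depending only on q, such that for every measure space (X,μ), every δ ∈ (0,1], and every real-valued measurable φ ∈ L²(μ) ∩ L^q(μ), the function |1+φ|^q − 1 − qφ − (q(q−1)/2)φ² is integrable and | ∫ ( |1+φ|^q − 1 − qφ − (q(q−1)/2)φ² ) dμ | ≤ C ( δ ‖φ‖_{L²}² + δ^{2−q} ‖φ‖_{L^q}^q ). -/

import Mathlib

open MeasureTheory Set Real


private lemma hasDerivAt_one_add_rpow (p : ℝ) (x : ℝ) (hx : 0 < 1 + x) :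
    HasDerivAt (fun t : ℝ => (1 + t) ^ p) (p * (1 + x) ^ (p - 1)) x := by
  have h : HasDerivAt (fun t : ℝ => 1 + t) 1 x := (hasDerivAt_id x).const_add 1
  simpa using h.rpow_const (Or.inl hx.ne')

private lemma hasDerivAt_abs_one_add_rpow (p : ℝ) (x : ℝ) (hx : 0 < 1 + x) :
    HasDerivAt (fun t : ℝ => |1 + t| ^ p) (p * (1 + x) ^ (p - 1)) x := by
  apply (hasDerivAt_one_add_rpow p x hx).congr_of_eventuallyEq
  have h1 : ∀ᶠ t in nhds x, (0:ℝ) < 1 + t := by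
    have := eventually_gt_nhds (show (-1:ℝ) < x by linarith)
    filter_upwards [this] with t ht; linarith
  filter_upwards [h1] with t ht
  rw [abs_of_pos ht]

private lemma mem_uIcc_abs_le {t u : ℝ} (hu : u ∈ uIcc (0:ℝ) t) : |u| ≤ |t| := by
  rcases le_total 0 t with h | h
  · rw [uIcc_of_le h, mem_Icc] at hu
    rw [abs_of_nonneg hu.1, abs_of_nonneg h]; exact hu.2
  · rw [uIcc_of_ge h, mem_Icc] at hu
    rw [abs_of_nonpos (hu.2.trans_eq rfl), abs_of_nonpos h]; linarith [hu.1]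

private lemma cubic_bound (q : ℝ) (hq : 2 < q) :
    ∃ L : ℝ, 0 < L ∧ ∀ t : ℝ, |t| ≤ 1/2 →
      |(|1 + t| ^ q - 1 - q * t - q * (q - 1) / 2 * t ^ 2)| ≤ L * |t| ^ 3 := by
  set L : ℝ := q * (q - 1) * (q - 2) * ((2:ℝ) ^ (q - 3) + 2 ^ (3 - q)) with hL
  have h2q : (0:ℝ) < 2 ^ (q-3) + 2 ^ (3-q) := by positivity
  have hLpos : 0 < L := by
    apply mul_pos _ h2q
    apply mul_pos (mul_pos (by linarith) (by linarith)) (by linarith)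
  refine ⟨L, hLpos, ?_⟩
  -- set S
  set S : Set ℝ := Icc (-(1/2):ℝ) (1/2) with hS
  have hmem : ∀ u : ℝ, |u| ≤ 1/2 → u ∈ S := fun u hu => by
    rw [hS, mem_Icc]; constructor <;> [linarith [neg_abs_le u]; linarith [le_abs_self u]]
  have hpos : ∀ u ∈ S, (0:ℝ) < 1 + u := fun u hu => by
    rw [hS, mem_Icc] at hu; linarith [hu.1]
  -- Step 1: F2 is L-Lipschitz on S
  have step1 : ∀ u ∈ S, |q * (q-1) * (1+u) ^ (q-2) - q * (q-1)| ≤ L * |u| := by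
    intro u hu
    have h0S : (0:ℝ) ∈ S := hmem 0 (by norm_num)
    have := (convex_Icc (-(1/2):ℝ) (1/2)).norm_image_sub_le_of_norm_hasDerivWithin_le
      (f := fun s => q * (q-1) * (1+s) ^ (q-2))
      (f' := fun s => q * (q-1) * ((q-2) * (1+s) ^ (q-2-1)))
      (C := L) (fun x hx => ?_) (fun x hx => ?_) h0S hu
    · simpa [Real.norm_eq_abs, Real.one_rpow] using this
    · have h := ((hasDerivAt_one_add_rpow (q-2) x (hpos x hx)).const_mul (q*(q-1))).hasDerivWithinAt (s := Icc (-(1/2):ℝ) (1/2))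
      exact h
    · have e : q - 2 - 1 = q - 3 := by ring
      simp only [e]
      have h1x : 0 < 1 + x := hpos x hx
      rw [mem_Icc] at hx
      have hxle : 1 + x ≤ 2 := by linarith [hx.2]
      have hxge : (1:ℝ)/2 ≤ 1 + x := by linarith [hx.1]
      have hb : (1+x) ^ (q-3) ≤ 2 ^ (q-3) + 2 ^ (3-q) := by
        rcases le_total 3 q with h3 | h3
        · have := Real.rpow_le_rpow (le_of_lt h1x) hxle (by linarith : (0:ℝ) ≤ q - 3)
          have h2 : (0:ℝ) ≤ 2 ^ (3-q) := by positivity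
          linarith
        · have := Real.rpow_le_rpow_of_nonpos (by norm_num : (0:ℝ) < 1/2) hxge
            (by linarith : q - 3 ≤ 0)
          have heq : ((1:ℝ)/2) ^ (q-3) = 2 ^ (3-q) := by
            rw [show (1:ℝ)/2 = 2⁻¹ by norm_num, ← Real.rpow_neg_one 2,
              ← Real.rpow_mul (by norm_num : (0:ℝ) ≤ 2)]
            ring_nf
          have h2 : (0:ℝ) ≤ 2 ^ (q-3) := by positivity
          rw [heq] at this
          linarith
      have hr : (0:ℝ) ≤ (1+x) ^ (q-3) := Real.rpow_nonneg h1x.le _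
      have hq0 : (0:ℝ) ≤ q * (q-1) * (q-2) := by
        apply mul_nonneg (mul_nonneg (by linarith) (by linarith)) (by linarith)
      have hnn : (0:ℝ) ≤ q * (q-1) * ((q-2) * (1+x) ^ (q-3)) := by
        apply mul_nonneg (mul_nonneg (by linarith) (by linarith))
        exact mul_nonneg (by linarith) hr
      rw [Real.norm_eq_abs, abs_of_nonneg hnn, hL]
      calc q * (q-1) * ((q-2) * (1+x) ^ (q-3)) = q * (q-1) * (q-2) * (1+x) ^ (q-3) := by ring
        _ ≤ q * (q-1) * (q-2) * (2 ^ (q-3) + 2 ^ (3-q)) := by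
            exact mul_le_mul_of_nonneg_left hb hq0
  -- Step 2
  have step2 : ∀ t : ℝ, |t| ≤ 1/2 →
      |q * (1+t) ^ (q-1) - q - q * (q-1) * t| ≤ L * |t| * |t| := by
    intro t ht
    have hsub : uIcc (0:ℝ) t ⊆ S := fun u hu => hmem u ((mem_uIcc_abs_le hu).trans ht)
    have key := (convex_uIcc (0:ℝ) t).norm_image_sub_le_of_norm_hasDerivWithin_le
      (f := fun u => q * (1+u) ^ (q-1) - q - q * (q-1) * u)
      (f' := fun u => q * ((q-1) * (1+u) ^ (q-1-1)) - q * (q-1))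
      (C := L * |t|) (fun x hx => ?_) (fun x hx => ?_) left_mem_uIcc right_mem_uIcc
    · simpa [Real.norm_eq_abs, Real.one_rpow] using key
    · have hd := (hasDerivAt_one_add_rpow (q-1) x (hpos x (hsub hx))).const_mul q
      have hd2 : HasDerivAt (fun u : ℝ => q * (1+u)^(q-1) - q - q*(q-1)*u)
          (q * ((q-1) * (1+x)^(q-1-1)) - q*(q-1)) x := by
        have := (hd.sub_const q).sub ((hasDerivAt_id x).const_mul (q*(q-1)))
        exact this.congr_deriv (by ring)
      exact hd2.hasDerivWithinAt
    · have e : q * ((q-1) * (1+x) ^ (q-1-1)) - q * (q-1)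
          = q * (q-1) * (1+x) ^ (q-2) - q * (q-1) := by
        rw [show q-1-1 = q-2 by ring]; ring
      simp only [Real.norm_eq_abs]
      rw [e]
      calc |q * (q-1) * (1+x) ^ (q-2) - q * (q-1)| ≤ L * |x| := step1 x (hsub hx)
        _ ≤ L * |t| := mul_le_mul_of_nonneg_left (mem_uIcc_abs_le hx) hLpos.le
  -- Step 3
  intro t ht
  have hsub : uIcc (0:ℝ) t ⊆ S := fun u hu => hmem u ((mem_uIcc_abs_le hu).trans ht)
  have key := (convex_uIcc (0:ℝ) t).norm_image_sub_le_of_norm_hasDerivWithin_le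
    (f := fun u => |1+u| ^ q - 1 - q * u - q * (q-1) / 2 * u ^ 2)
    (f' := fun u => q * (1+u) ^ (q-1) - q - q * (q-1) * u)
    (C := L * |t| * |t|) (fun x hx => ?_) (fun x hx => ?_) left_mem_uIcc right_mem_uIcc
  · have key' : |(|1+t| ^ q - 1 - q * t - q * (q-1) / 2 * t ^ 2)| ≤ L * |t| * |t| * |t| := by
      have h0 : |1+(0:ℝ)| ^ q = 1 := by norm_num
      simpa [Real.norm_eq_abs, h0] using key
    calc |(|1 + t| ^ q - 1 - q * t - q * (q - 1) / 2 * t ^ 2)| ≤ L * |t| * |t| * |t| := key'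
      _ = L * |t| ^ 3 := by ring
  · have hd := hasDerivAt_abs_one_add_rpow q x (hpos x (hsub hx))
    have hd2 : HasDerivAt (fun u : ℝ => |1+u| ^ q - 1 - q * u - q * (q-1) / 2 * u ^ 2)
        (q * (1+x) ^ (q-1) - q - q * (q-1) * x) x := by
      have := ((hd.sub_const 1).sub ((hasDerivAt_id x).const_mul q)).sub
        ((hasDerivAt_pow 2 x).const_mul (q * (q-1) / 2))
      exact this.congr_deriv (by simp; ring)
    exact hd2.hasDerivWithinAt
  · rw [Real.norm_eq_abs]
    calc |q * (1+x) ^ (q-1) - q - q * (q-1) * x| ≤ L * |x| * |x| :=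
        step2 x ((mem_uIcc_abs_le hx).trans ht)
      _ ≤ L * |t| * |t| := by
        have h1 := mem_uIcc_abs_le hx
        exact mul_le_mul (mul_le_mul_of_nonneg_left h1 hLpos.le) h1 (abs_nonneg x)
          (mul_nonneg hLpos.le (abs_nonneg t))

private lemma pointwise_bound (q : ℝ) (hq : 2 < q) :
    ∃ C : ℝ, 0 < C ∧ ∀ (δ : ℝ), 0 < δ → δ ≤ 1 → ∀ t : ℝ,
      |(|1 + t| ^ q - 1 - q * t - q * (q - 1) / 2 * t ^ 2)| ≤
        C * (δ * t ^ 2 + δ ^ (2 - q) * |t| ^ q) := by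
  obtain ⟨L, hLpos, hL⟩ := cubic_bound q hq
  set A : ℝ := (3:ℝ) ^ q + 2 ^ q + q * 2 ^ q + q * (q - 1) / 2 * 2 ^ q with hA
  have h3q : (0:ℝ) < 3 ^ q := rpow_pos_of_pos (by norm_num) q
  have h2q : (0:ℝ) < 2 ^ q := rpow_pos_of_pos (by norm_num) q
  have hApos : 0 < A := by
    have h1 : (0:ℝ) ≤ q * 2 ^ q := mul_nonneg (by linarith) h2q.le
    have h2 : (0:ℝ) ≤ q * (q - 1) / 2 * 2 ^ q := by
      apply mul_nonneg _ h2q.le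
      have : (0:ℝ) ≤ q * (q - 1) := mul_nonneg (by linarith) (by linarith)
      linarith
    rw [hA]; linarith
  refine ⟨L + A, by linarith, ?_⟩
  intro δ hδ hδ1 t
  have hδq : (1:ℝ) ≤ δ ^ (2 - q) :=
    Real.one_le_rpow_of_pos_of_le_one_of_nonpos hδ hδ1 (by linarith)
  have htq : (0:ℝ) ≤ |t| ^ q := rpow_nonneg (abs_nonneg t) q
  have ht2 : (0:ℝ) ≤ t ^ 2 := sq_nonneg t
  rcases le_total (|t|) (1/2) with hsm | hbig
  · -- small case: use cubic bound
    have hcb := hL t hsm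
    have ht3 : |t| ^ (3:ℕ) = |t| * t ^ 2 := by
      rw [pow_succ' , sq_abs]  -- |t|^3 = |t| * |t|^2? check
    rcases le_total (|t|) δ with hc | hc
    · -- |t| ≤ δ: L|t|^3 ≤ L δ t²
      have : L * |t| ^ 3 ≤ L * (δ * t ^ 2) := by
        rw [ht3]
        apply mul_le_mul_of_nonneg_left _ hLpos.le
        exact mul_le_mul_of_nonneg_right hc ht2
      calc |(|1 + t| ^ q - 1 - q * t - q * (q - 1) / 2 * t ^ 2)| ≤ L * (δ * t^2) :=
            hcb.trans this
        _ ≤ (L + A) * (δ * t ^ 2 + δ ^ (2-q) * |t| ^ q) := by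
            have n1 : 0 ≤ A * (δ * t ^ 2) := mul_nonneg hApos.le (mul_nonneg hδ.le ht2)
            have n2 : 0 ≤ (L + A) * (δ ^ (2-q) * |t| ^ q) :=
              mul_nonneg (by linarith) (mul_nonneg (by linarith) htq)
            nlinarith
    · -- δ ≤ |t| ≤ 1/2 : |t|^3 ≤ δ^{2-q} |t|^q
      have htpos : 0 < |t| := lt_of_lt_of_le hδ hc
      have key : |t| ^ (3:ℝ) ≤ δ ^ (2-q) * |t| ^ q := by
        have hsplit : |t| ^ (3:ℝ) = |t| ^ (3-q) * |t| ^ q := by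
          rw [← Real.rpow_add htpos]; ring_nf
        rw [hsplit]
        apply mul_le_mul_of_nonneg_right _ htq
        rcases le_total q 3 with h3 | h3
        · have := Real.rpow_le_one (abs_nonneg t) (by linarith : |t| ≤ 1) (by linarith : (0:ℝ) ≤ 3 - q)
          linarith
        · calc |t| ^ (3-q) ≤ δ ^ (3-q) :=
                Real.rpow_le_rpow_of_nonpos hδ hc (by linarith)
            _ ≤ δ ^ (2-q) := Real.rpow_le_rpow_of_exponent_ge hδ hδ1 (by linarith)
      have h3r : |t| ^ (3:ℝ) = |t| ^ (3:ℕ) := by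
        rw [← Real.rpow_natCast |t| 3]; norm_num
      calc |(|1 + t| ^ q - 1 - q * t - q * (q - 1) / 2 * t ^ 2)| ≤ L * |t| ^ 3 := hcb
        _ ≤ L * (δ ^ (2-q) * |t| ^ q) := by
            apply mul_le_mul_of_nonneg_left _ hLpos.le
            rw [← h3r]; exact key
        _ ≤ (L + A) * (δ * t ^ 2 + δ ^ (2-q) * |t| ^ q) := by
            have n1 : 0 ≤ A * (δ ^ (2-q) * |t| ^ q) :=
              mul_nonneg hApos.le (mul_nonneg (by linarith) htq)
            have n2 : 0 ≤ (L + A) * (δ * t ^ 2) :=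
              mul_nonneg (by linarith) (mul_nonneg hδ.le ht2)
            nlinarith
  · -- large case: |t| ≥ 1/2
    have h1t : (1:ℝ) ≤ 2 * |t| := by linarith
    have htpos : (0:ℝ) < |t| := by linarith
    have e2 : ((2:ℝ) * |t|) ^ q = 2 ^ q * |t| ^ q :=
      Real.mul_rpow (by norm_num) (abs_nonneg t)
    have hbase : ((2:ℝ) * |t|) ^ q ≥ 1 := Real.one_le_rpow h1t (by linarith)
    -- |1+t|^q ≤ 3^q |t|^q
    have hterm1 : |1 + t| ^ q ≤ 3 ^ q * |t| ^ q := by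
      have : |1 + t| ≤ 3 * |t| := by
        calc |1 + t| ≤ |(1:ℝ)| + |t| := abs_add_le 1 t
          _ ≤ 3 * |t| := by rw [abs_one]; linarith
      calc |1 + t| ^ q ≤ (3 * |t|) ^ q :=
            Real.rpow_le_rpow (abs_nonneg _) this (by linarith)
        _ = 3 ^ q * |t| ^ q := Real.mul_rpow (by norm_num) (abs_nonneg t)
    have hterm2 : (1:ℝ) ≤ 2 ^ q * |t| ^ q := by rw [← e2]; exact hbase
    have hterm3 : |t| ≤ 2 ^ q * |t| ^ q := by
      calc |t| ≤ 2 * |t| := by linarith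
        _ = (2 * |t|) ^ (1:ℝ) := (Real.rpow_one _).symm
        _ ≤ (2 * |t|) ^ q := Real.rpow_le_rpow_of_exponent_le h1t (by linarith)
        _ = 2 ^ q * |t| ^ q := e2
    have hterm4 : t ^ 2 ≤ 2 ^ q * |t| ^ q := by
      calc t ^ 2 = |t| ^ (2:ℕ) := (sq_abs t).symm
        _ ≤ (2 * |t|) ^ (2:ℕ) := by
            apply pow_le_pow_left₀ (abs_nonneg t); linarith
        _ = (2 * |t|) ^ ((2:ℕ):ℝ) := (Real.rpow_natCast _ 2).symm
        _ ≤ (2 * |t|) ^ q := by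
            apply Real.rpow_le_rpow_of_exponent_le h1t; push_cast; linarith
        _ = 2 ^ q * |t| ^ q := e2
    have habs : |(|1 + t| ^ q - 1 - q * t - q * (q - 1) / 2 * t ^ 2)| ≤ A * |t| ^ q := by
      have h0 : |1 + t| ^ q ≥ 0 := rpow_nonneg (abs_nonneg _) q
      have hqt : |q * t| = q * |t| := by rw [abs_mul, abs_of_pos (by linarith : (0:ℝ) < q)]
      have hc2 : |q * (q-1) / 2 * t ^ 2| = q * (q-1)/2 * t^2 := by
        rw [abs_mul, abs_of_nonneg ht2, abs_of_nonneg]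
        have : (0:ℝ) ≤ q * (q-1) := mul_nonneg (by linarith) (by linarith)
        linarith
      have tr : |(|1 + t| ^ q - 1 - q * t - q * (q - 1) / 2 * t ^ 2)| ≤
          |1 + t| ^ q + 1 + q * |t| + q * (q-1)/2 * t^2 := by
        have a1 := abs_add_le (|1 + t| ^ q - 1 - q * t) (-(q * (q - 1) / 2 * t ^ 2))
        have a2 := abs_add_le (|1 + t| ^ q - 1) (-(q * t))
        have a3 := abs_add_le (|1 + t| ^ q) (-(1:ℝ))
        simp only [abs_neg] at a1 a2 a3
        rw [hc2] at a1; rw [hqt] at a2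
        have e0 : |(|1+t|^q)| = |1+t|^q := abs_of_nonneg h0
        rw [e0] at a3
        calc |(|1 + t| ^ q - 1 - q * t - q * (q - 1) / 2 * t ^ 2)|
            = |(|1 + t| ^ q - 1 - q * t) + (-(q * (q - 1) / 2 * t ^ 2))| := by ring_nf
          _ ≤ |(|1 + t| ^ q - 1 - q * t)| + q * (q-1)/2 * t^2 := a1
          _ ≤ |(|1 + t| ^ q - 1)| + q * |t| + q * (q-1)/2 * t^2 := by
              have : |(|1 + t| ^ q - 1 - q * t)| = |(|1+t|^q - 1) + (-(q*t))| := by ring_nf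
              rw [this] at *; linarith
          _ ≤ |1 + t| ^ q + 1 + q * |t| + q * (q-1)/2 * t^2 := by
              have : |(|1 + t| ^ q - 1)| = |(|1+t|^q) + (-(1:ℝ))| := by ring_nf
              rw [this]; simp only [abs_one] at a3; linarith
      have hq1 : q * |t| ≤ q * (2 ^ q * |t| ^ q) :=
        mul_le_mul_of_nonneg_left hterm3 (by linarith)
      have hq2 : q * (q-1)/2 * t^2 ≤ q*(q-1)/2 * (2 ^ q * |t| ^ q) := by
        apply mul_le_mul_of_nonneg_left hterm4
        have : (0:ℝ) ≤ q * (q-1) := mul_nonneg (by linarith) (by linarith)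
        linarith
      rw [hA]
      calc |(|1 + t| ^ q - 1 - q * t - q * (q - 1) / 2 * t ^ 2)|
          ≤ |1 + t| ^ q + 1 + q * |t| + q * (q-1)/2 * t^2 := tr
        _ ≤ 3 ^ q * |t| ^ q + 2 ^ q * |t| ^ q + q * (2 ^ q * |t| ^ q)
              + q*(q-1)/2 * (2 ^ q * |t| ^ q) := by linarith
        _ = (3 ^ q + 2 ^ q + q * 2 ^ q + q * (q - 1) / 2 * 2 ^ q) * |t| ^ q := by ring
    calc |(|1 + t| ^ q - 1 - q * t - q * (q - 1) / 2 * t ^ 2)| ≤ A * |t| ^ q := habs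
      _ ≤ A * (δ ^ (2-q) * |t| ^ q) := by
          apply mul_le_mul_of_nonneg_left _ hApos.le
          nlinarith
      _ ≤ (L + A) * (δ * t ^ 2 + δ ^ (2-q) * |t| ^ q) := by
          have n1 : 0 ≤ L * (δ ^ (2-q) * |t| ^ q) :=
            mul_nonneg hLpos.le (mul_nonneg (by linarith) htq)
          have n2 : 0 ≤ (L + A) * (δ * t ^ 2) :=
            mul_nonneg (by linarith) (mul_nonneg hδ.le ht2)
          nlinarith


private lemma integral_abs_rpow_eq {X : Type} [MeasurableSpace X] {μ : Measure X}
    {f : X → ℝ} {r : ℝ} (hr : 0 < r) (hf : MemLp f (ENNReal.ofReal r) μ) :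
    ∫ x, |f x| ^ r ∂μ = (eLpNorm f (ENNReal.ofReal r) μ).toReal ^ r := by
  have hp0 : ENNReal.ofReal r ≠ 0 := by
    simp only [ne_eq, ENNReal.ofReal_eq_zero, not_le]; exact hr
  have hint : (0:ℝ) ≤ ∫ a, ‖f a‖ ^ (ENNReal.ofReal r).toReal ∂μ :=
    integral_nonneg fun a => Real.rpow_nonneg (norm_nonneg _) _
  rw [hf.eLpNorm_eq_integral_rpow_norm hp0 ENNReal.ofReal_ne_top,
    ENNReal.toReal_ofReal (Real.rpow_nonneg hint _)]
  simp only [ENNReal.toReal_ofReal hr.le, Real.norm_eq_abs] at *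
  rw [Real.rpow_inv_rpow hint hr.ne']

theorem integral_truncated_taylor_estimate (q : ℝ) (hq : 2 < q) :
    ∃ C : ℝ, 0 < C ∧ ∀ (X : Type) (_ : MeasurableSpace X) (μ : Measure X) (δ : ℝ),
      0 < δ → δ ≤ 1 → ∀ φ : X → ℝ, MemLp φ 2 μ → MemLp φ (ENNReal.ofReal q) μ →
      Integrable (fun x => |1 + φ x| ^ q - 1 - q * φ x - q * (q - 1) / 2 * φ x ^ 2) μ ∧
      |∫ x, (|1 + φ x| ^ q - 1 - q * φ x - q * (q - 1) / 2 * φ x ^ 2) ∂μ| ≤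
        C * (δ * (eLpNorm φ 2 μ).toReal ^ 2 +
          δ ^ (2 - q) * (eLpNorm φ (ENNReal.ofReal q) μ).toReal ^ q) := by
  obtain ⟨C, hC, hpt⟩ := pointwise_bound q hq
  refine ⟨C, hC, ?_⟩
  intro X mX μ δ hδ hδ1 φ hφ2 hφq
  have hq0 : (0:ℝ) < q := by linarith
  have hpq0 : ENNReal.ofReal q ≠ 0 := by
    simp only [ne_eq, ENNReal.ofReal_eq_zero, not_le]; exact hq0
  have hsq : Integrable (fun x => φ x ^ 2) μ := hφ2.integrable_sq
  have hqi : Integrable (fun x => |φ x| ^ q) μ := by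
    have := hφq.integrable_norm_rpow hpq0 ENNReal.ofReal_ne_top
    simpa [ENNReal.toReal_ofReal hq0.le, Real.norm_eq_abs] using this
  have hG : Integrable (fun x => C * (δ * φ x ^ 2 + δ ^ (2-q) * |φ x| ^ q)) μ :=
    ((hsq.const_mul δ).add (hqi.const_mul (δ ^ (2-q)))).const_mul C
  have hφm := hφ2.aestronglyMeasurable
  have hmeas : AEStronglyMeasurable
      (fun x => |1 + φ x| ^ q - 1 - q * φ x - q * (q - 1) / 2 * φ x ^ 2) μ := by
    have hc : Continuous (fun t : ℝ => |1 + t| ^ q) :=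
      (continuous_abs.comp (continuous_const.add continuous_id)).rpow_const
        (fun x => Or.inr hq0.le)
    have h1 := hc.comp_aestronglyMeasurable hφm
    have h2 := (continuous_pow 2).comp_aestronglyMeasurable hφm
    exact ((h1.sub aestronglyMeasurable_const).sub (hφm.const_mul q)).sub
      (h2.const_mul (q * (q - 1) / 2))
  have hbound : ∀ x, ‖|1 + φ x| ^ q - 1 - q * φ x - q * (q - 1) / 2 * φ x ^ 2‖ ≤
      C * (δ * φ x ^ 2 + δ ^ (2-q) * |φ x| ^ q) := fun x => by
    rw [Real.norm_eq_abs]; exact hpt δ hδ hδ1 (φ x)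
  have hint : Integrable
      (fun x => |1 + φ x| ^ q - 1 - q * φ x - q * (q - 1) / 2 * φ x ^ 2) μ :=
    hG.mono' hmeas (Filter.Eventually.of_forall hbound)
  refine ⟨hint, ?_⟩
  have hq2 : ∫ x, |φ x| ^ q ∂μ = (eLpNorm φ (ENNReal.ofReal q) μ).toReal ^ q :=
    integral_abs_rpow_eq hq0 hφq
  have h22 : ∫ x, φ x ^ 2 ∂μ = (eLpNorm φ 2 μ).toReal ^ 2 := by
    have h2e : ENNReal.ofReal (2:ℝ) = 2 := by norm_num
    have hm2 : MemLp φ (ENNReal.ofReal (2:ℝ)) μ := by rwa [h2e]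
    have key := integral_abs_rpow_eq (by norm_num : (0:ℝ) < 2) hm2
    rw [h2e] at key
    calc ∫ x, φ x ^ 2 ∂μ = ∫ x, |φ x| ^ (2:ℝ) ∂μ := by
          congr 1; ext x
          rw [show ((2:ℝ)) = ((2:ℕ):ℝ) by norm_num, Real.rpow_natCast, sq_abs]
      _ = (eLpNorm φ 2 μ).toReal ^ (2:ℝ) := key
      _ = (eLpNorm φ 2 μ).toReal ^ (2:ℕ) := by
          rw [show ((2:ℝ)) = ((2:ℕ):ℝ) by norm_num, Real.rpow_natCast]
  calc |∫ x, (|1 + φ x| ^ q - 1 - q * φ x - q * (q - 1) / 2 * φ x ^ 2) ∂μ|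
      = ‖∫ x, (|1 + φ x| ^ q - 1 - q * φ x - q * (q - 1) / 2 * φ x ^ 2) ∂μ‖ :=
        (Real.norm_eq_abs _).symm
    _ ≤ ∫ x, ‖|1 + φ x| ^ q - 1 - q * φ x - q * (q - 1) / 2 * φ x ^ 2‖ ∂μ :=
        norm_integral_le_integral_norm _
    _ ≤ ∫ x, C * (δ * φ x ^ 2 + δ ^ (2-q) * |φ x| ^ q) ∂μ :=
        integral_mono hint.norm hG hbound
    _ = C * (δ * ∫ x, φ x ^ 2 ∂μ + δ ^ (2-q) * ∫ x, |φ x| ^ q ∂μ) := by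
        rw [integral_const_mul, integral_add (hsq.const_mul δ) (hqi.const_mul _),
          integral_const_mul, integral_const_mul]
    _ = C * (δ * (eLpNorm φ 2 μ).toReal ^ 2 +
          δ ^ (2 - q) * (eLpNorm φ (ENNReal.ofReal q) μ).toReal ^ q) := by
        rw [hq2, h22]
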